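/- Let A be an invertible n×n matrix. Then there exist a constant c ≥ 1 and an n×n matrix Ã all of whose eigenvalues are positive real numbers, such that for all j ∈ ℤ and r > 0: A^j(B(0, r/c)) ⊆ Ã^j(B(0,r)) ⊆ A^j(B(0, cr)). -/

import Mathlib

open MeasureTheory
open scoped ENNReal

open Polynomial Matrix in
private lemma stmt16_spectrum_iff_root {n : ℕ} (N : Matrix (Fin n) (Fin n) ℂ) (z : ℂ) :
    z ∈ spectrum ℂ N ↔ N.charpoly.IsRoot z := by
  rw [spectrum.mem_iff]
  have h1 : N.charpoly.eval z = (algebraMap ℂ (Matrix (Fin n) (Fin n) ℂ) z - N).det := by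
    rw [Matrix.charpoly, ← Polynomial.coe_evalRingHom, RingHom.map_det]
    congr 1
    ext i j
    by_cases h : i = j <;>
      simp [Matrix.charmatrix_apply, h, Matrix.algebraMap_matrix_apply, Matrix.diagonal]
  rw [Matrix.isUnit_iff_isUnit_det, isUnit_iff_ne_zero, not_ne_iff, ← h1, Polynomial.IsRoot.def]

set_option maxHeartbeats 2000000 in
/-- Let `A` be an invertible `n × n` matrix (a linear automorphism of `ℝⁿ`). Then there exist
a constant `c ≥ 1` and a linear automorphism `Ã` all of whose (complex) eigenvalues are
positive real numbers, such that for all `j ∈ ℤ` and `r > 0`: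
`A^j(B(0, r/c)) ⊆ Ã^j(B(0,r)) ⊆ A^j(B(0, c*r))`. -/
theorem stmt16 (n : ℕ)
    (A : EuclideanSpace ℝ (Fin n) ≃ₗ[ℝ] EuclideanSpace ℝ (Fin n)) :
    ∃ c : ℝ, 1 ≤ c ∧
      ∃ B : EuclideanSpace ℝ (Fin n) ≃ₗ[ℝ] EuclideanSpace ℝ (Fin n),
        (∀ z ∈ spectrum ℂ
            (((LinearMap.toMatrix (EuclideanSpace.basisFun (Fin n) ℝ).toBasis
                (EuclideanSpace.basisFun (Fin n) ℝ).toBasis) B.toLinearMap).map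
              (algebraMap ℝ ℂ)),
          z.im = 0 ∧ 0 < z.re) ∧
        ∀ (j : ℤ) (r : ℝ), 0 < r →
          (A ^ j) '' Metric.ball 0 (r / c) ⊆ (B ^ j) '' Metric.ball 0 r ∧
          (B ^ j) '' Metric.ball 0 r ⊆ (A ^ j) '' Metric.ball 0 (c * r) := by
  classical
  open Polynomial Matrix in
  rcases Nat.eq_zero_or_pos n with hn | hn
  · -- trivial case `n = 0`
    refine ⟨1, le_refl 1, A, ?_, ?_⟩
    · intro z hz
      exfalso
      rw [stmt16_spectrum_iff_root] at hz
      have : Matrix.charpoly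
          (((LinearMap.toMatrix (EuclideanSpace.basisFun (Fin n) ℝ).toBasis
                (EuclideanSpace.basisFun (Fin n) ℝ).toBasis) A.toLinearMap).map
              (algebraMap ℝ ℂ)) = 1 := by
        subst hn
        rw [Matrix.charpoly, Matrix.det_isEmpty]
      rw [this] at hz
      simp [Polynomial.IsRoot.def] at hz
    · intro j r hr
      constructor
      · rw [div_one]
      · rw [one_mul]
  · -- main case
    set E := EuclideanSpace ℝ (Fin n) with hE
    set b := (EuclideanSpace.basisFun (Fin n) ℝ).toBasis with hb
    set M : Matrix (Fin n) (Fin n) ℝ := LinearMap.toMatrix b b A.toLinearMap with hM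
    set ρ : ℝ →+* ℂ := algebraMap ℝ ℂ with hρ
    set Mc : Matrix (Fin n) (Fin n) ℂ := M.map ρ with hMc
    set χ : Polynomial ℂ := Mc.charpoly with hχ
    set Λ : Finset ℂ := χ.roots.toFinset with hΛ
    -- basic facts
    have hχne : χ ≠ 0 := (Matrix.charpoly_monic Mc).ne_zero
    have hspecΛ : spectrum ℂ Mc = (Λ : Set ℂ) := by
      ext z
      rw [stmt16_spectrum_iff_root]
      simp [hΛ, Polynomial.mem_roots', hχne]
      exact Iff.rfl
    have hMunit : IsUnit M := by
      refine ⟨⟨M, LinearMap.toMatrix b b A.symm.toLinearMap, ?_, ?_⟩, rfl⟩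
      · rw [hM, ← LinearMap.toMatrix_mul,
          show (A.toLinearMap * A.symm.toLinearMap : _) = LinearMap.id from by ext x; simp,
          LinearMap.toMatrix_id]
      · rw [hM, ← LinearMap.toMatrix_mul,
          show (A.symm.toLinearMap * A.toLinearMap : _) = LinearMap.id from by ext x; simp,
          LinearMap.toMatrix_id]
    have hMcunit : IsUnit Mc := by
      have := hMunit.map (RingHom.mapMatrix ρ)
      simpa [RingHom.mapMatrix_apply] using this
    have h0Λ : (0 : ℂ) ∉ Λ := by
      intro h0
      have : (0:ℂ) ∈ spectrum ℂ Mc := by rw [hspecΛ]; exact_mod_cast h0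
      exact (spectrum.zero_notMem_iff ℂ).mpr hMcunit this
    have hconjΛ : ∀ l ∈ Λ, (starRingEnd ℂ) l ∈ Λ := by
      intro l hl
      have hroot : χ.eval l = 0 := by
        have := Multiset.mem_toFinset.mp hl
        exact (Polynomial.mem_roots'.mp this).2
      have hχr : χ = (Matrix.charpoly M).map ρ := by
        rw [hχ, hMc, Matrix.charpoly_map]
      have hcomp : (starRingEnd ℂ).comp ρ = ρ := by
        ext r
        simp [hρ, Complex.conj_ofReal]
      have : χ.eval ((starRingEnd ℂ) l) = 0 := by
        rw [hχr, Polynomial.eval_map] at hroot ⊢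
        have hc := congrArg (starRingEnd ℂ) hroot
        rw [Polynomial.hom_eval₂, map_zero, hcomp] at hc
        exact hc
      rw [hΛ, Multiset.mem_toFinset, Polynomial.mem_roots']
      exact ⟨hχne, this⟩
    -- coprimality of the linear-factor powers
    have hcop : ∀ x ∈ Λ, ∀ y ∈ Λ, x ≠ y →
        IsCoprime ((X - C x) ^ n : Polynomial ℂ) ((X - C y) ^ n) := by
      intro x _ y _ hxy
      exact (Polynomial.pairwise_coprime_X_sub_C (Function.injective_id) hxy).pow
    -- the "kill" lemma : polynomials divisible by all `(X - l)^n` vanish at `Mc`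
    have hkill : ∀ q : Polynomial ℂ, (∀ l ∈ Λ, (X - C l) ^ n ∣ q) → aeval Mc q = 0 := by
      intro q hq
      have h1 : χ ∣ ∏ l ∈ Λ, (X - C l) ^ n := by
        have hsp : χ.Splits := IsAlgClosed.splits χ
        have heq := hsp.eq_prod_roots_of_monic (Matrix.charpoly_monic Mc)
        calc χ = (Multiset.map (fun a => X - C a) χ.roots).prod := heq
          _ = ∏ l ∈ Λ, (X - C l) ^ χ.roots.count l := by
              rw [hΛ, Finset.prod_multiset_map_count]
          _ ∣ ∏ l ∈ Λ, (X - C l) ^ n := by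
              apply Finset.prod_dvd_prod_of_dvd
              intro l _
              apply pow_dvd_pow
              calc χ.roots.count l ≤ Multiset.card χ.roots := Multiset.count_le_card _ _
                _ ≤ χ.natDegree := Polynomial.card_roots' χ
                _ = n := by rw [hχ, Matrix.charpoly_natDegree_eq_dim, Fintype.card_fin]
      have h2 : (∏ l ∈ Λ, (X - C l) ^ n) ∣ q := by
        apply Finset.prod_dvd_of_coprime
        · intro x hx y hy hxy
          exact hcop x hx y hy hxy
        · exact hq
      obtain ⟨t, ht⟩ := h1.trans h2
      rw [ht, _root_.map_mul, hχ, Matrix.aeval_self_charpoly, zero_mul]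
    -- the representation relation
    set Rep : Polynomial ℂ → (ℂ → ℂ) → Prop :=
      fun q h => ∀ l ∈ Λ, (X - C l) ^ n ∣ q - C (h l) with hRep
    have hRepMul : ∀ q g q' g', Rep q g → Rep q' g' →
        Rep (q * q') (fun z => g z * g' z) := by
      intro q g q' g' h1 h2 l hl
      have e1 := h1 l hl
      have e2 := h2 l hl
      have hsplit : q * q' - C (g l * g' l)
          = (q - C (g l)) * q' + C (g l) * (q' - C (g' l)) := by
        rw [Polynomial.C_mul]; ring
      rw [hsplit]
      exact dvd_add (e1.mul_right _) (e2.mul_left _)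
    have hRepOne : Rep 1 (fun _ => 1) := by
      intro l hl
      simp
    have hRepEq : ∀ q g q' g', Rep q g → Rep q' g' → (∀ l ∈ Λ, g l = g' l) →
        aeval Mc q = aeval Mc q' := by
      intro q g q' g' h1 h2 heq
      have h0 : aeval Mc (q - q') = 0 := by
        apply hkill
        intro l hl
        have : q - q' = (q - C (g l)) - (q' - C (g' l)) := by
          rw [heq l hl]; ring
        rw [this]
        exact dvd_sub (h1 l hl) (h2 l hl)
      rw [map_sub] at h0
      exact sub_eq_zero.mp h0
    have hRepPow : ∀ q g, Rep q g → ∀ k : ℕ, Rep (q ^ k) (fun z => g z ^ k) := by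
      intro q g hq k
      induction k with
      | zero => simpa using hRepOne
      | succ k ih =>
          have := hRepMul _ _ _ _ ih hq
          simpa [pow_succ] using this
    -- construction of the idempotent-like interpolation polynomials
    have hEx : ∀ l : ℂ, ∃ e : Polynomial ℂ, l ∈ Λ →
        ((X - C l) ^ n ∣ e - 1) ∧ ∀ m ∈ Λ, m ≠ l → (X - C m) ^ n ∣ e := by
      intro l
      by_cases hl : l ∈ Λ
      · have hco : IsCoprime ((X - C l) ^ n : Polynomial ℂ)
            (∏ m ∈ Λ.erase l, (X - C m) ^ n) := by
          apply IsCoprime.prod_right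
          intro m hm
          exact hcop l hl m (Finset.mem_of_mem_erase hm)
            (Ne.symm (Finset.ne_of_mem_erase hm))
        obtain ⟨u, v, huv⟩ := hco
        refine ⟨v * ∏ m ∈ Λ.erase l, (X - C m) ^ n, fun _ => ⟨?_, ?_⟩⟩
        · have : v * (∏ m ∈ Λ.erase l, (X - C m) ^ n) - 1 = -(u * (X - C l) ^ n) := by
            rw [← huv]; ring
          rw [this]
          exact (Dvd.intro_left u rfl).neg_right
        · intro m hm hne
          exact Dvd.dvd.mul_left
            (Finset.dvd_prod_of_mem _ (Finset.mem_erase.mpr ⟨hne, hm⟩)) v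
      · exact ⟨1, fun h => absurd h hl⟩
    choose e he using hEx
    set Pfun : (ℂ → ℂ) → Polynomial ℂ := fun g => ∑ l ∈ Λ, C (g l) * e l with hPfun
    have hRepP : ∀ g, Rep (Pfun g) g := by
      intro g l hl
      have hsum : Pfun g = C (g l) * e l + ∑ m ∈ Λ.erase l, C (g m) * e m := by
        rw [hPfun]
        exact (Finset.add_sum_erase _ _ hl).symm
      have hsplit : Pfun g - C (g l)
          = C (g l) * (e l - 1) + ∑ m ∈ Λ.erase l, C (g m) * e m := by
        rw [hsum, mul_sub, mul_one]; ring
      rw [hsplit]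
      refine dvd_add (((he l hl).1).mul_left _) (Finset.dvd_sum ?_)
      intro m hm
      refine Dvd.dvd.mul_left ?_ _
      exact (he m (Finset.mem_of_mem_erase hm)).2 l hl (Finset.ne_of_mem_erase hm).symm
    have hReval : ∀ q g, Rep q g → ∀ l ∈ Λ, q.eval l = g l := by
      intro q g hq l hl
      obtain ⟨t, ht⟩ := hq l hl
      have := congrArg (Polynomial.eval l) ht
      simp only [eval_sub, eval_C, eval_mul, eval_pow, eval_X, sub_self,
        zero_pow hn.ne', zero_mul] at this
      exact sub_eq_zero.mp this
    -- the functions giving the "phase" of the eigenvalues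
    set F : ℂ → ℂ := fun z => starRingEnd ℂ z / ((‖z‖ : ℝ) : ℂ) with hF
    set G : ℂ → ℂ := fun z => z / ((‖z‖ : ℝ) : ℂ) with hG
    have habsF : ∀ l ∈ Λ, ‖F l‖ = 1 := by
      intro l hl
      have hl0 : l ≠ 0 := fun h => h0Λ (h ▸ hl)
      have : ‖l‖ ≠ 0 := norm_ne_zero_iff.mpr hl0
      simp [hF, map_div₀, Complex.norm_conj, Complex.norm_real,
        abs_of_nonneg (norm_nonneg l), div_self this]
    have habsG : ∀ l ∈ Λ, ‖G l‖ = 1 := by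
      intro l hl
      have hl0 : l ≠ 0 := fun h => h0Λ (h ▸ hl)
      have : ‖l‖ ≠ 0 := norm_ne_zero_iff.mpr hl0
      simp [hG, map_div₀, Complex.norm_real,
        abs_of_nonneg (norm_nonneg l), div_self this]
    have hFG : ∀ l ∈ Λ, F l * G l = 1 := by
      intro l hl
      have hl0 : l ≠ 0 := fun h => h0Λ (h ▸ hl)
      have h0' : ((‖l‖ : ℝ) : ℂ) ≠ 0 := by
        simpa using hl0
      rw [hF, hG]
      show (starRingEnd ℂ l / ((‖l‖ : ℝ) : ℂ)) * (l / ((‖l‖ : ℝ) : ℂ)) = 1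
      rw [div_mul_div_comm, mul_comm, Complex.mul_conj, Complex.normSq_eq_norm_sq, sq]
      push_cast
      field_simp
    have hsymF : ∀ z, starRingEnd ℂ (F (starRingEnd ℂ z)) = F z := by
      intro z
      simp [hF, map_div₀, Complex.norm_conj, Complex.conj_conj, Complex.conj_ofReal]
    have hsymG : ∀ z, starRingEnd ℂ (G (starRingEnd ℂ z)) = G z := by
      intro z
      simp [hG, map_div₀, Complex.norm_conj, Complex.conj_conj, Complex.conj_ofReal]
    -- real polynomials representing conjugation-symmetric functions
    have hreal : ∀ g : ℂ → ℂ, (∀ z, starRingEnd ℂ (g (starRingEnd ℂ z)) = g z) →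
        ∃ Rr : Polynomial ℝ, Rep (Rr.map ρ) g := by
      intro g hsym
      set P : Polynomial ℂ := Pfun g with hP
      set Q : Polynomial ℂ := C (1/2 : ℂ) * (P + P.map (starRingEnd ℂ)) with hQ
      have hQrep : Rep Q g := by
        intro l hl
        have h1 : (X - C l) ^ n ∣ P - C (g l) := hRepP g l hl
        have hlc : starRingEnd ℂ l ∈ Λ := hconjΛ l hl
        have h2 : (X - C (starRingEnd ℂ l)) ^ n ∣ P - C (g (starRingEnd ℂ l)) :=
          hRepP g _ hlc
        have h3 : (X - C l) ^ n ∣ P.map (starRingEnd ℂ) - C (g l) := by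
          have := Polynomial.map_dvd (starRingEnd ℂ) h2
          simpa [Polynomial.map_pow, Polynomial.map_sub, Polynomial.map_X,
            Polynomial.map_C, Complex.conj_conj, hsym l] using this
        have h2C : C (1/2 : ℂ) * (C (g l) + C (g l)) = C (g l) := by
          rw [← Polynomial.C_add, ← Polynomial.C_mul]
          congr 1
          ring
        have hsplit : Q - C (g l)
            = C (1/2 : ℂ) * ((P - C (g l)) + (P.map (starRingEnd ℂ) - C (g l))) := by
          rw [hQ]
          calc C (1/2 : ℂ) * (P + P.map (starRingEnd ℂ)) - C (g l)
              = C (1/2 : ℂ) * (P + P.map (starRingEnd ℂ))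
                - C (1/2 : ℂ) * (C (g l) + C (g l)) := by rw [h2C]
            _ = C (1/2 : ℂ) * ((P - C (g l)) + (P.map (starRingEnd ℂ) - C (g l))) := by
                ring
        rw [hsplit]
        exact (dvd_add h1 h3).mul_left _
      have hQconj : Q.map (starRingEnd ℂ) = Q := by
        have hcc : (starRingEnd ℂ).comp (starRingEnd ℂ) = RingHom.id ℂ := by
          ext z; simp
        rw [hQ, Polynomial.map_mul, Polynomial.map_add, Polynomial.map_map, hcc,
          Polynomial.map_id, Polynomial.map_C]
        have : starRingEnd ℂ (1/2 : ℂ) = (1/2 : ℂ) := by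
          rw [map_div₀, _root_.map_one, _root_.map_ofNat]
        rw [this]
        ring
      refine ⟨∑ i ∈ Finset.range (Q.natDegree + 1),
        Polynomial.monomial i (Q.coeff i).re, ?_⟩
      have hmap : (∑ i ∈ Finset.range (Q.natDegree + 1),
          Polynomial.monomial i (Q.coeff i).re).map ρ = Q := by
        conv_rhs => rw [Q.as_sum_range]
        rw [Polynomial.map_sum]
        apply Finset.sum_congr rfl
        intro i _
        rw [Polynomial.map_monomial]
        congr 1
        have hci := congrArg (fun p => Polynomial.coeff p i) hQconj
        simp only [Polynomial.coeff_map] at hci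
        exact Complex.conj_eq_iff_re.mp hci
      rw [hmap]
      exact hQrep
    obtain ⟨QF, hQF⟩ := hreal F hsymF
    obtain ⟨QG, hQG⟩ := hreal G hsymG
    -- the real matrices
    set Sr : Matrix (Fin n) (Fin n) ℝ := aeval M QF with hSr
    set Tr : Matrix (Fin n) (Fin n) ℝ := aeval M QG with hTr
    have hmapaeval : ∀ Rr : Polynomial ℝ, (aeval M Rr).map ρ = aeval Mc (Rr.map ρ) := by
      intro Rr
      have h1 : (Algebra.ofId ℝ ℂ).mapMatrix (aeval M Rr)
          = aeval ((Algebra.ofId ℝ ℂ).mapMatrix M) Rr :=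
        (Polynomial.aeval_algHom_apply ((Algebra.ofId ℝ ℂ).mapMatrix) M Rr).symm
      rw [AlgHom.mapMatrix_apply, AlgHom.mapMatrix_apply] at h1
      have h2 : M.map ⇑(Algebra.ofId ℝ ℂ) = Mc := rfl
      rw [h2] at h1
      rw [hρ, Polynomial.aeval_map_algebraMap ℂ Mc Rr]
      exact h1
    have hcommAeval : ∀ p q : Polynomial ℝ, aeval M p * aeval M q = aeval M q * aeval M p := by
      intro p q
      rw [← _root_.map_mul, ← _root_.map_mul, mul_comm]
    have hST : Sr * Tr = 1 := by
      apply Matrix.map_injective (RingHom.injective ρ)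
      show (Sr * Tr).map ⇑ρ = (1 : Matrix (Fin n) (Fin n) ℝ).map ⇑ρ
      rw [Matrix.map_mul, hSr, hTr, hmapaeval, hmapaeval, ← _root_.map_mul,
        hRepEq _ _ _ _ (hRepMul _ _ _ _ hQF hQG) hRepOne hFG, _root_.map_one,
        Matrix.map_one _ (map_zero ρ) (map_one ρ)]
    have hTS : Tr * Sr = 1 := by
      rw [hSr, hTr, hcommAeval]
      rw [hSr, hTr] at hST
      exact hST
    have hMS : Sr * M = M * Sr := by
      calc Sr * M = aeval M QF * aeval M X := by rw [Polynomial.aeval_X, hSr]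
        _ = aeval M X * aeval M QF := hcommAeval _ _
        _ = M * Sr := by rw [Polynomial.aeval_X, hSr]
    -- the norm bound
    set C0 : ℝ := ∑ l ∈ Λ,
      ‖LinearMap.toContinuousLinearMap (Matrix.toEuclideanLin (aeval Mc (e l)))‖ with hC0
    have hnormC : ∀ (q : Polynomial ℂ) (g : ℂ → ℂ), Rep q g →
        (∀ l ∈ Λ, ‖g l‖ = 1) →
        ∀ x : EuclideanSpace ℂ (Fin n), ‖Matrix.toEuclideanLin (aeval Mc q) x‖ ≤ C0 * ‖x‖ := by
      intro q g hq habs x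
      have h1 : aeval Mc q = aeval Mc (Pfun g) :=
        hRepEq _ _ _ _ hq (hRepP g) (fun l _ => rfl)
      have h2 : aeval Mc (Pfun g) = ∑ l ∈ Λ, g l • (aeval Mc (e l)) := by
        rw [hPfun, map_sum]
        apply Finset.sum_congr rfl
        intro l _
        rw [_root_.map_mul, Polynomial.aeval_C, Algebra.smul_def]
      have h3 : Matrix.toEuclideanLin (∑ l ∈ Λ, g l • aeval Mc (e l)) x
          = ∑ l ∈ Λ, g l • (Matrix.toEuclideanLin (aeval Mc (e l)) x) := by
        rw [_root_.map_sum]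
        simp only [_root_.map_smul, LinearMap.sum_apply, LinearMap.smul_apply]
      rw [h1, h2, h3]
      refine le_trans (norm_sum_le _ _) ?_
      rw [hC0, Finset.sum_mul]
      apply Finset.sum_le_sum
      intro l hl
      rw [norm_smul]
      have h4 : ‖g l‖ = 1 := by rw [habs l hl]
      rw [h4, one_mul]
      have h5 := (LinearMap.toContinuousLinearMap
        (Matrix.toEuclideanLin (aeval Mc (e l)))).le_opNorm x
      rw [show (LinearMap.toContinuousLinearMap (Matrix.toEuclideanLin (aeval Mc (e l)))) x
          = Matrix.toEuclideanLin (aeval Mc (e l)) x from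
        congrFun (LinearMap.coe_toContinuousLinearMap' _) x] at h5
      exact h5
    have hnormR : ∀ (R : Matrix (Fin n) (Fin n) ℝ) (q : Polynomial ℂ) (g : ℂ → ℂ),
        R.map ⇑ρ = aeval Mc q → Rep q g → (∀ l ∈ Λ, ‖g l‖ = 1) →
        ∀ x : EuclideanSpace ℝ (Fin n), ‖Matrix.toEuclideanLin R x‖ ≤ C0 * ‖x‖ := by
      intro R q g hRq hq habs x
      set xc : EuclideanSpace ℂ (Fin n) :=
        (WithLp.equiv 2 _).symm (fun i => ((x i : ℝ) : ℂ)) with hxc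
      have hxeq : ‖xc‖ = ‖x‖ := by
        rw [EuclideanSpace.norm_eq, EuclideanSpace.norm_eq]
        congr 1
        apply Finset.sum_congr rfl
        intro i _
        rw [show xc i = ((x i : ℝ) : ℂ) from rfl, Complex.norm_real]
      have hvec : Matrix.toEuclideanLin (R.map ⇑ρ) xc
          = (WithLp.equiv 2 _).symm (fun i => ((Matrix.toEuclideanLin R x i : ℝ) : ℂ)) := by
        ext i
        show ((R.map ⇑ρ) *ᵥ (fun j => ((x j : ℝ) : ℂ))) i = ((Matrix.toEuclideanLin R x i : ℝ) : ℂ)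
        show ∑ j, ρ (R i j) * ((x j : ℝ) : ℂ) = ((Matrix.toEuclideanLin R x i : ℝ) : ℂ)
        have : Matrix.toEuclideanLin R x i = ∑ j, R i j * x j := rfl
        rw [this]
        push_cast [hρ]
        rfl
      have hnorm2 : ‖Matrix.toEuclideanLin R x‖ = ‖Matrix.toEuclideanLin (R.map ⇑ρ) xc‖ := by
        rw [hvec, EuclideanSpace.norm_eq, EuclideanSpace.norm_eq]
        congr 1
        apply Finset.sum_congr rfl
        intro i _
        rw [show ((WithLp.equiv 2 _).symm
            (fun i => ((Matrix.toEuclideanLin R x i : ℝ) : ℂ))) i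
          = ((Matrix.toEuclideanLin R x i : ℝ) : ℂ) from rfl, Complex.norm_real]
      rw [hnorm2, hRq, ← hxeq]
      exact hnormC q g hq habs xc
    -- the linear automorphism coming from `Sr`
    have hEucl : (Matrix.toEuclideanLin : Matrix (Fin n) (Fin n) ℝ ≃ₗ[ℝ] _)
        = Matrix.toLin b b := by
      rw [Matrix.toEuclideanLin_eq_toLin_orthonormal, hb]
    have hcomp : ∀ P Q : Matrix (Fin n) (Fin n) ℝ,
        Matrix.toLin b b P ∘ₗ Matrix.toLin b b Q = Matrix.toLin b b (P * Q) :=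
      fun P Q => (Matrix.toLin_mul b b b P Q).symm
    set Slin : EuclideanSpace ℝ (Fin n) ≃ₗ[ℝ] EuclideanSpace ℝ (Fin n) :=
      LinearEquiv.ofLinear (Matrix.toLin b b Sr) (Matrix.toLin b b Tr)
        (by rw [hcomp, hST, Matrix.toLin_one])
        (by rw [hcomp, hTS, Matrix.toLin_one]) with hSlin
    have hSlincoe : ∀ x, Slin x = Matrix.toLin b b Sr x := fun x => rfl
    have hSlininvcoe : ∀ x, Slin⁻¹ x = Matrix.toLin b b Tr x := fun x => rfl
    have hAlin : (A : EuclideanSpace ℝ (Fin n) →ₗ[ℝ] EuclideanSpace ℝ (Fin n))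
        = Matrix.toLin b b M := (Matrix.toLin_toMatrix b b _).symm
    have hAapp : ∀ x, A x = Matrix.toLin b b M x := fun x => LinearMap.congr_fun hAlin x
    have hSlinpow : ∀ k : ℕ, ∀ x, (Slin ^ k) x = Matrix.toLin b b (Sr ^ k) x := by
      intro k
      induction k with
      | zero =>
          intro x
          rw [pow_zero, pow_zero, Matrix.toLin_one]
          rfl
      | succ k ih =>
          intro x
          rw [pow_succ, pow_succ]
          have h1 : (Slin ^ k * Slin) x = (Slin ^ k) (Slin x) := rfl
          rw [h1, hSlincoe, ih, ← hcomp]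
          rfl
    have hSlininvpow : ∀ k : ℕ, ∀ x, (Slin⁻¹ ^ k) x = Matrix.toLin b b (Tr ^ k) x := by
      intro k
      induction k with
      | zero =>
          intro x
          rw [pow_zero, pow_zero, Matrix.toLin_one]
          rfl
      | succ k ih =>
          intro x
          rw [pow_succ, pow_succ]
          have h1 : (Slin⁻¹ ^ k * Slin⁻¹) x = (Slin⁻¹ ^ k) (Slin⁻¹ x) := rfl
          rw [h1, hSlininvcoe, ih, ← hcomp]
          rfl
    -- matrix powers realize the functions `F ^ k`, `G ^ k`
    have hSrpow : ∀ k : ℕ, (Sr ^ k).map ⇑ρ = aeval Mc ((QF.map ρ) ^ k) := by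
      intro k
      have h1 : (Sr ^ k).map ⇑ρ = (Sr.map ⇑ρ) ^ k := by
        rw [← RingHom.mapMatrix_apply, ← RingHom.mapMatrix_apply, map_pow]
      rw [h1, hSr, hmapaeval, ← map_pow]
    have hTrpow : ∀ k : ℕ, (Tr ^ k).map ⇑ρ = aeval Mc ((QG.map ρ) ^ k) := by
      intro k
      have h1 : (Tr ^ k).map ⇑ρ = (Tr.map ⇑ρ) ^ k := by
        rw [← RingHom.mapMatrix_apply, ← RingHom.mapMatrix_apply, map_pow]
      rw [h1, hTr, hmapaeval, ← map_pow]
    -- the uniform bound on all the integer powers of `Slin`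
    have hbound : ∀ (j : ℤ) (x : EuclideanSpace ℝ (Fin n)), ‖(Slin ^ j) x‖ ≤ C0 * ‖x‖ := by
      intro j x
      cases j with
      | ofNat k =>
          rw [Int.ofNat_eq_coe, zpow_natCast, hSlinpow k x]
          have := hnormR (Sr ^ k) ((QF.map ρ) ^ k) (fun z => F z ^ k)
            (hSrpow k) (hRepPow _ _ hQF k)
            (fun l hl => by rw [norm_pow, habsF l hl, one_pow]) x
          rwa [hEucl] at this
      | negSucc k =>
          rw [zpow_negSucc, ← inv_pow, hSlininvpow (k + 1) x]
          have := hnormR (Tr ^ (k + 1)) ((QG.map ρ) ^ (k + 1)) (fun z => G z ^ (k + 1))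
            (hTrpow (k + 1)) (hRepPow _ _ hQG (k + 1))
            (fun l hl => by rw [norm_pow, habsG l hl, one_pow]) x
          rwa [hEucl] at this
    -- commutation of `A` and `Slin`
    have hcommfun : ∀ x, A (Slin x) = Slin (A x) := by
      intro x
      rw [hSlincoe, hAapp, hSlincoe, hAapp]
      have h1 : Matrix.toLin b b M (Matrix.toLin b b Sr x)
          = Matrix.toLin b b (M * Sr) x := by
        rw [← hcomp]; rfl
      have h2 : Matrix.toLin b b Sr (Matrix.toLin b b M x)
          = Matrix.toLin b b (Sr * M) x := by
        rw [← hcomp]; rfl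
      rw [h1, h2, hMS]
    have hcommute : Commute A Slin := by
      show A * Slin = Slin * A
      apply DFunLike.ext
      intro x
      show A (Slin x) = Slin (A x)
      exact hcommfun x
    -- the constant
    set c : ℝ := max 1 C0 with hc
    have hc1 : (1:ℝ) ≤ c := le_max_left _ _
    have hc0 : (0:ℝ) < c := lt_of_lt_of_le one_pos hc1
    have hbound' : ∀ (j : ℤ) (x : EuclideanSpace ℝ (Fin n)), ‖(Slin ^ j) x‖ ≤ c * ‖x‖ := by
      intro j x
      refine le_trans (hbound j x) ?_
      exact mul_le_mul_of_nonneg_right (le_max_right _ _) (norm_nonneg x)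
    refine ⟨c, hc1, A * Slin, ?_, ?_⟩
    · -- the spectrum condition
      have hBlin : ((A * Slin : EuclideanSpace ℝ (Fin n) ≃ₗ[ℝ] EuclideanSpace ℝ (Fin n)) :
          EuclideanSpace ℝ (Fin n) →ₗ[ℝ] EuclideanSpace ℝ (Fin n))
          = Matrix.toLin b b (M * Sr) := by
        apply LinearMap.ext
        intro x
        show A (Slin x) = Matrix.toLin b b (M * Sr) x
        rw [hSlincoe, hAapp, ← hcomp]
        rfl
      have hBmat : LinearMap.toMatrix b b
          ((A * Slin : EuclideanSpace ℝ (Fin n) ≃ₗ[ℝ] EuclideanSpace ℝ (Fin n)) :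
            EuclideanSpace ℝ (Fin n) →ₗ[ℝ] EuclideanSpace ℝ (Fin n)) = M * Sr := by
        rw [hBlin, LinearMap.toMatrix_toLin]
      intro z hz
      rw [hBmat] at hz
      have hmul : (M * Sr).map ⇑ρ = aeval Mc (X * QF.map ρ) := by
        rw [Matrix.map_mul, hSr, hmapaeval, _root_.map_mul, Polynomial.aeval_X]
      rw [hmul] at hz
      have hne : (spectrum ℂ Mc).Nonempty := by
        have hdeg : χ.degree ≠ 0 := by
          rw [Polynomial.degree_eq_natDegree hχne, hχ,
            Matrix.charpoly_natDegree_eq_dim, Fintype.card_fin]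
          exact_mod_cast hn.ne'
        obtain ⟨z0, hz0⟩ := IsAlgClosed.exists_root χ hdeg
        exact ⟨z0, (stmt16_spectrum_iff_root Mc z0).mpr hz0⟩
      rw [spectrum.map_polynomial_aeval_of_nonempty Mc _ hne] at hz
      obtain ⟨l, hlspec, rfl⟩ := hz
      have hlΛ : l ∈ Λ := by
        rw [hspecΛ] at hlspec
        exact_mod_cast hlspec
      have hl0 : l ≠ 0 := fun h => h0Λ (h ▸ hlΛ)
      have heval : Polynomial.eval l (X * QF.map ρ) = l * F l := by
        rw [eval_mul, eval_X, hReval _ _ hQF l hlΛ]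
      have habs' : l * F l = ((‖l‖ : ℝ) : ℂ) := by
        rw [hF]
        show l * (starRingEnd ℂ l / ((‖l‖ : ℝ) : ℂ)) = ((‖l‖ : ℝ) : ℂ)
        have h0' : ((‖l‖ : ℝ) : ℂ) ≠ 0 := by
          simpa using hl0
        rw [mul_div_assoc', Complex.mul_conj, Complex.normSq_eq_norm_sq, sq]
        push_cast
        field_simp
      show (Polynomial.eval l (X * QF.map ρ)).im = 0 ∧
          0 < (Polynomial.eval l (X * QF.map ρ)).re
      rw [heval, habs']
      constructor
      · exact Complex.ofReal_im _
      · rw [Complex.ofReal_re]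
        exact norm_pos_iff.mpr hl0
    · -- the ball inclusions
      intro j r hr
      have hzp : (A * Slin) ^ j = A ^ j * Slin ^ j := hcommute.mul_zpow j
      constructor
      · rintro y ⟨x, hx, rfl⟩
        rw [mem_ball_zero_iff] at hx
        refine ⟨(Slin ^ (-j)) x, ?_, ?_⟩
        · rw [mem_ball_zero_iff]
          calc ‖(Slin ^ (-j)) x‖ ≤ c * ‖x‖ := hbound' _ _
            _ < c * (r / c) := by
                exact mul_lt_mul_of_pos_left hx hc0
            _ = r := by field_simp
        · show ((A * Slin) ^ j) ((Slin ^ (-j)) x) = (A ^ j) x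
          rw [hzp]
          have h1 : (A ^ j * Slin ^ j) ((Slin ^ (-j)) x)
              = (A ^ j) ((Slin ^ j) ((Slin ^ (-j)) x)) := rfl
          rw [h1]
          have h2 : (Slin ^ j) ((Slin ^ (-j)) x) = x := by
            have h3 : (Slin ^ j) ((Slin ^ (-j)) x) = (Slin ^ j * Slin ^ (-j)) x := rfl
            rw [h3, ← _root_.zpow_add, add_neg_cancel, zpow_zero]
            rfl
          rw [h2]
      · rintro y ⟨x, hx, rfl⟩
        rw [mem_ball_zero_iff] at hx
        refine ⟨(Slin ^ j) x, ?_, ?_⟩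
        · rw [mem_ball_zero_iff]
          calc ‖(Slin ^ j) x‖ ≤ c * ‖x‖ := hbound' _ _
            _ < c * r := mul_lt_mul_of_pos_left hx hc0
        · rw [hzp]
          rfl
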